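/- arXiv:1601.03700 — 2 statements merged into one kernel-verified Lean document; each statement's English description precedes it below -/
import Mathlib

section
/- Let 0<s<1 and 2≤p<∞ be fixed and let Ω⊂ℝⁿ be an open set. Then for every u∈C²(Ω)∩L^∞(Ω) and every x∈Ω, the principal value lim_{ε↓0} ∫_{Ω\B_ε(x)} |u(x)-u(y)|^{p-2}(u(x)-u(y))/|x-y|^{n+sp} dy exists and is finite; that is, the regional (s,p)-Laplacian (-Δ_{p,Ω})^s u(x) is well defined at every point of Ω. -/
open MeasureTheory Filter Topology Set

noncomputable section

abbrev Euc (n : ℕ) := EuclideanSpace ℝ (Fin n)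
lemma g_hasDerivAt {p : ℝ} (hp : 2 ≤ p) (t : ℝ) :
    HasDerivAt (fun t : ℝ => |t| ^ (p - 2) * t) ((p - 1) * |t| ^ (p - 2)) t := by
  rcases lt_trichotomy t 0 with ht | ht | ht
  · have h1 : HasDerivAt (fun s : ℝ => (-s) ^ (p - 2)) ((p-2) * (-t) ^ (p - 2 - 1) * (-1)) t := by
      have := (Real.hasDerivAt_rpow_const (p := p - 2) (Or.inl (by linarith : (-t) ≠ 0)))
      exact HasDerivAt.comp t this (hasDerivAt_neg t)
    have h2 : HasDerivAt (fun s : ℝ => (-s) ^ (p - 2) * s)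
        (((p-2) * (-t) ^ (p - 2 - 1) * (-1)) * t + (-t) ^ (p - 2) * 1) t :=
      h1.mul (hasDerivAt_id t)
    have heq : (fun s : ℝ => |s| ^ (p - 2) * s) =ᶠ[𝓝 t] (fun s : ℝ => (-s) ^ (p - 2) * s) := by
      filter_upwards [gt_mem_nhds ht] with s hs
      rw [abs_of_neg hs]
    have hval : ((p-2) * (-t) ^ (p - 2 - 1) * (-1)) * t + (-t) ^ (p - 2) * 1
        = (p - 1) * |t| ^ (p - 2) := by
      have hmt : (0:ℝ) < -t := by linarith
      have : (-t) ^ (p - 2 - 1) * (-t) = (-t) ^ (p - 2) := by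
        rw [← Real.rpow_add_one hmt.ne']; ring_nf
      rw [abs_of_neg ht]
      calc ((p-2) * (-t) ^ (p - 2 - 1) * (-1)) * t + (-t) ^ (p - 2) * 1
          = (p-2) * ((-t) ^ (p - 2 - 1) * (-t)) + (-t) ^ (p - 2) := by ring
        _ = (p-2) * (-t) ^ (p - 2) + (-t) ^ (p - 2) := by rw [this]
        _ = (p - 1) * (-t) ^ (p - 2) := by ring
    exact hval ▸ (h2.congr_of_eventuallyEq heq)
  · subst ht
    rcases eq_or_lt_of_le hp with hp2 | hp2
    · have : (fun t : ℝ => |t| ^ (p - 2) * t) = fun t : ℝ => t := by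
        funext s; rw [← hp2]; norm_num
      rw [this]
      have : (p - 1) * |(0:ℝ)| ^ (p - 2) = 1 := by rw [← hp2]; norm_num
      rw [this]; exact hasDerivAt_id 0
    · have hval : (p - 1) * |(0:ℝ)| ^ (p - 2) = 0 := by
        rw [abs_zero, Real.zero_rpow (by linarith), mul_zero]
      rw [hval, hasDerivAt_iff_tendsto_slope]
      have hcong : ∀ s : ℝ, s ≠ 0 → slope (fun t : ℝ => |t| ^ (p - 2) * t) 0 s = |s| ^ (p - 2) := by
        intro s hs
        rw [slope_def_field]
        field_simp
        simp
      have hcont : Tendsto (fun s : ℝ => |s| ^ (p - 2)) (𝓝[≠] (0:ℝ)) (𝓝 0) := by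
        have h0 : ContinuousAt (fun y : ℝ => y ^ (p - 2)) |(0:ℝ)| := by
          rw [abs_zero]
          exact Real.continuousAt_rpow_const 0 (p - 2) (Or.inr (by linarith))
        have h1 : Tendsto (fun s : ℝ => |s| ^ (p - 2)) (𝓝 (0:ℝ)) (𝓝 (|(0:ℝ)| ^ (p-2))) :=
          h0.comp continuous_abs.continuousAt
        rw [abs_zero, Real.zero_rpow (by linarith : p - 2 ≠ 0)] at h1
        exact h1.mono_left nhdsWithin_le_nhds
      refine hcont.congr' ?_
      filter_upwards [self_mem_nhdsWithin] with s hs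
      exact (hcong s hs).symm
  · have h1 : HasDerivAt (fun s : ℝ => s ^ (p - 2)) ((p-2) * t ^ (p - 2 - 1)) t :=
      Real.hasDerivAt_rpow_const (Or.inl ht.ne')
    have h2 : HasDerivAt (fun s : ℝ => s ^ (p - 2) * s)
        (((p-2) * t ^ (p - 2 - 1)) * t + t ^ (p - 2) * 1) t := h1.mul (hasDerivAt_id t)
    have heq : (fun s : ℝ => |s| ^ (p - 2) * s) =ᶠ[𝓝 t] (fun s : ℝ => s ^ (p - 2) * s) := by
      filter_upwards [lt_mem_nhds ht] with s hs
      rw [abs_of_pos hs]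
    have hval : ((p-2) * t ^ (p - 2 - 1)) * t + t ^ (p - 2) * 1 = (p - 1) * |t| ^ (p - 2) := by
      have : t ^ (p - 2 - 1) * t = t ^ (p - 2) := by
        rw [← Real.rpow_add_one ht.ne']; ring_nf
      rw [abs_of_pos ht]
      calc ((p-2) * t ^ (p - 2 - 1)) * t + t ^ (p - 2) * 1
          = (p-2) * (t ^ (p - 2 - 1) * t) + t ^ (p - 2) := by ring
        _ = (p - 1) * t ^ (p - 2) := by rw [this]; ring
    exact hval ▸ (h2.congr_of_eventuallyEq heq)

lemma g_cont {p : ℝ} (hp : 2 ≤ p) : Continuous (fun t : ℝ => |t| ^ (p - 2) * t) :=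
  continuous_iff_continuousAt.2 fun t => (g_hasDerivAt hp t).continuousAt

lemma g_neg (p : ℝ) (t : ℝ) : |(-t)| ^ (p - 2) * (-t) = -(|t| ^ (p - 2) * t) := by
  rw [abs_neg]; ring

lemma g_abs {p : ℝ} (hp : 2 ≤ p) (t : ℝ) : |(|t| ^ (p - 2) * t)| = |t| ^ (p - 1) := by
  rcases eq_or_ne t 0 with rfl | ht
  · simp [Real.zero_rpow (by linarith : p - 1 ≠ 0)]
  · rw [abs_mul, abs_of_nonneg (Real.rpow_nonneg (abs_nonneg t) _),
      ← Real.rpow_add_one (abs_ne_zero.2 ht)]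
    ring_nf

lemma g_lip {p : ℝ} (hp : 2 ≤ p) {a b M : ℝ} (ha : |a| ≤ M) (hb : |b| ≤ M) :
    |(|a| ^ (p - 2) * a) - (|b| ^ (p - 2) * b)| ≤ (p - 1) * M ^ (p - 2) * |a - b| := by
  have habs : ∀ t ∈ uIcc b a, |t| ≤ M := by
    intro t htm
    rw [Set.mem_uIcc] at htm
    rcases htm with ⟨h1, h2⟩ | ⟨h1, h2⟩
    · exact (abs_le_max_abs_abs h1 h2).trans (max_le hb ha)
    · exact (abs_le_max_abs_abs h1 h2).trans (max_le ha hb)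
  have key := Convex.norm_image_sub_le_of_norm_hasDerivWithin_le
    (f := fun t : ℝ => |t| ^ (p - 2) * t) (f' := fun t => (p - 1) * |t| ^ (p - 2))
    (s := uIcc b a) (C := (p - 1) * M ^ (p - 2))
    (fun t _ => (g_hasDerivAt hp t).hasDerivWithinAt)
    (fun t htm => by
      rw [Real.norm_eq_abs,
        abs_of_nonneg (mul_nonneg (by linarith) (Real.rpow_nonneg (abs_nonneg t) _))]
      have : |t| ^ (p - 2) ≤ M ^ (p - 2) :=
        Real.rpow_le_rpow (abs_nonneg t) (habs t htm) (by linarith)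
      exact mul_le_mul_of_nonneg_left this (by linarith))
    (convex_uIcc b a) left_mem_uIcc right_mem_uIcc
  simpa [Real.norm_eq_abs] using key
lemma pow_rpow_comm {q : ℝ} (hq : 0 ≤ q) (m : ℕ) (e : ℝ) : (q ^ m) ^ e = (q ^ e) ^ m := by
  rw [← Real.rpow_natCast q m, ← Real.rpow_mul hq, ← Real.rpow_natCast (q ^ e) m,
    ← Real.rpow_mul hq, mul_comm]

lemma meas_rpow_norm (n : ℕ) (b : ℝ) (x : Euc n) :
    Measurable (fun y : Euc n => ‖y - x‖ ^ b) := by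
  fun_prop

lemma integrableOn_rpow_ball (n : ℕ) {b : ℝ} (hb : -(n:ℝ) < b) (x : Euc n) (R : ℝ) :
    IntegrableOn (fun y : Euc n => ‖y - x‖ ^ b) (Metric.ball x R) volume := by
  rcases le_or_gt R 0 with hR | hR
  · rw [Metric.ball_eq_empty.2 hR]; exact integrableOn_empty
  have hmeas := meas_rpow_norm n b x
  rcases le_or_gt 0 b with hb0 | hb0
  · refine Measure.integrableOn_of_bounded (M := R ^ b) measure_ball_lt_top.ne
      hmeas.aestronglyMeasurable ?_
    rw [ae_restrict_iff' measurableSet_ball]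
    filter_upwards with y hy
    rw [Real.norm_eq_abs, abs_of_nonneg (Real.rpow_nonneg (norm_nonneg _) _)]
    refine Real.rpow_le_rpow (norm_nonneg _) ?_ hb0
    rw [← dist_eq_norm]
    exact (Metric.mem_ball.1 hy).le
  have hn : 0 < n := by
    by_contra h
    push_neg at h
    interval_cases n
    · simp at hb; linarith
  haveI : Nonempty (Fin n) := ⟨⟨0, hn⟩⟩
  set r : ℕ → ℝ := fun k => R * (2:ℝ)⁻¹ ^ k with hr
  have hrpos : ∀ k, 0 < r k := fun k => by positivity
  set A : ℕ → Set (Euc n) := fun k => Metric.ball x (r k) \ Metric.ball x (r (k+1)) with hA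
  have hAmeas : ∀ k, MeasurableSet (A k) :=
    fun k => measurableSet_ball.diff measurableSet_ball
  have hAbound : ∀ k, ∀ y ∈ A k, ‖y - x‖ ^ b ≤ r (k+1) ^ b := by
    intro k y hy
    refine Real.rpow_le_rpow_of_nonpos (hrpos (k+1)) ?_ hb0.le
    rw [← dist_eq_norm]
    exact not_lt.1 fun h => hy.2 (Metric.mem_ball.2 h)
  have hAint : ∀ k, IntegrableOn (fun y : Euc n => ‖y - x‖ ^ b) (A k) volume := by
    intro k
    refine Measure.integrableOn_of_bounded (M := r (k+1) ^ b)
      (ne_top_of_le_ne_top measure_ball_lt_top.ne (measure_mono diff_subset))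
      hmeas.aestronglyMeasurable ?_
    rw [ae_restrict_iff' (hAmeas k)]
    filter_upwards with y hy
    rw [Real.norm_eq_abs, abs_of_nonneg (Real.rpow_nonneg (norm_nonneg _) _)]
    exact hAbound k y hy
  set c : ℝ := (volume (Metric.ball (0:Euc n) 1)).toReal with hc
  have hc0 : 0 ≤ c := ENNReal.toReal_nonneg
  have hvol : ∀ k, (volume (A k)).toReal ≤ r k ^ n * c := by
    intro k
    have h1 : volume (A k) ≤ volume (Metric.ball x (r k)) := measure_mono diff_subset
    have h2 : volume (Metric.ball x (r k))
        = ENNReal.ofReal (r k ^ Module.finrank ℝ (Euc n)) * volume (Metric.ball (0:Euc n) 1) :=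
      Measure.addHaar_ball_of_pos volume x (hrpos k)
    calc (volume (A k)).toReal ≤ (volume (Metric.ball x (r k))).toReal :=
          ENNReal.toReal_mono measure_ball_lt_top.ne h1
      _ = r k ^ n * c := by
          rw [h2, ENNReal.toReal_mul, ENNReal.toReal_ofReal (by positivity),
            finrank_euclideanSpace_fin]
  set ρ : ℝ := (2:ℝ)⁻¹ ^ (b + n) with hρ
  have hρ0 : 0 ≤ ρ := Real.rpow_nonneg (by norm_num) _
  have hρ1 : ρ < 1 := Real.rpow_lt_one (by norm_num) (by norm_num) (by linarith)
  have h2pos : (0:ℝ) < (2:ℝ)⁻¹ := by norm_num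
  have hterm : ∀ k, r (k+1) ^ b * (r k ^ n * c) = (R ^ b * (2:ℝ)⁻¹ ^ b * R ^ n * c) * ρ ^ k := by
    intro k
    have e1 : r (k+1) ^ b = R ^ b * ((2:ℝ)⁻¹ ^ b * ((2:ℝ)⁻¹ ^ b) ^ k) := by
      rw [hr]
      rw [Real.mul_rpow hR.le (by positivity), pow_rpow_comm h2pos.le, pow_succ]
      ring
    have e2 : (r k) ^ n = R ^ n * ((2:ℝ)⁻¹ ^ (n:ℝ)) ^ k := by
      rw [hr, mul_pow]
      congr 1
      rw [show ((2:ℝ)⁻¹ ^ k) ^ n = ((2:ℝ)⁻¹ ^ k) ^ (n:ℝ) from (Real.rpow_natCast _ n).symm,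
        pow_rpow_comm h2pos.le]
    rw [e1, e2, hρ, show (2:ℝ)⁻¹ ^ (b + (n:ℝ)) = (2:ℝ)⁻¹ ^ b * (2:ℝ)⁻¹ ^ (n:ℝ) from
      Real.rpow_add h2pos _ _, mul_pow]
    ring
  have hsum : Summable (fun k => ∫ y in A k, ‖(fun y : Euc n => ‖y - x‖ ^ b) y‖ ∂volume) := by
    refine Summable.of_nonneg_of_le (fun k => integral_nonneg (fun y => norm_nonneg _)) ?_
      (((summable_geometric_of_lt_one hρ0 hρ1).mul_left (R ^ b * (2:ℝ)⁻¹ ^ b * R ^ n * c)))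
    intro k
    have hb1 : ‖∫ y in A k, ‖(fun y : Euc n => ‖y - x‖ ^ b) y‖ ∂volume‖
        ≤ r (k+1) ^ b * (volume (A k)).toReal := by
      refine norm_setIntegral_le_of_norm_le_const
        (lt_of_le_of_lt (measure_mono diff_subset) measure_ball_lt_top) ?_
      intro y hy
      rw [norm_norm, Real.norm_eq_abs, abs_of_nonneg (Real.rpow_nonneg (norm_nonneg _) _)]
      exact hAbound k y hy
    calc ∫ y in A k, ‖(fun y : Euc n => ‖y - x‖ ^ b) y‖ ∂volume
        ≤ ‖∫ y in A k, ‖(fun y : Euc n => ‖y - x‖ ^ b) y‖ ∂volume‖ := le_abs_self _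
      _ ≤ r (k+1) ^ b * (volume (A k)).toReal := hb1
      _ ≤ r (k+1) ^ b * (r k ^ n * c) :=
          mul_le_mul_of_nonneg_left (hvol k) (Real.rpow_nonneg (hrpos _).le _)
      _ = (R ^ b * (2:ℝ)⁻¹ ^ b * R ^ n * c) * ρ ^ k := hterm k
  have hunion : (⋃ k, A k) = Metric.ball x R \ {x} := by
    ext y
    simp only [mem_iUnion, hA, mem_diff, Metric.mem_ball, mem_singleton_iff]
    constructor
    · rintro ⟨k, ⟨hk1, hk2⟩⟩
      refine ⟨lt_of_lt_of_le hk1 ?_, fun hyx => hk2 (by simp [hyx, hrpos _])⟩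
      rw [hr]
      calc R * (2:ℝ)⁻¹ ^ k ≤ R * 1 :=
            mul_le_mul_of_nonneg_left (pow_le_one₀ (by norm_num) (by norm_num)) hR.le
        _ = R := mul_one R
    · rintro ⟨hyR, hyx⟩
      have hd : 0 < dist y x := dist_pos.2 hyx
      have hex : ∃ k : ℕ, r (k+1) ≤ dist y x := by
        obtain ⟨m, hm⟩ := exists_pow_lt_of_lt_one (div_pos hd (by positivity : (0:ℝ) < R))
          (by norm_num : (2:ℝ)⁻¹ < 1)
        refine ⟨m, ?_⟩
        have h1 : r (m+1) ≤ r m := by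
          have : (2:ℝ)⁻¹ ^ (m+1) ≤ (2:ℝ)⁻¹ ^ m :=
            pow_le_pow_of_le_one (by norm_num) (by norm_num) (Nat.le_succ m)
          simp only [hr]
          nlinarith
        have h2 : r m ≤ dist y x := by
          have := (lt_div_iff₀ (by positivity : (0:ℝ) < R)).1 hm
          simp only [hr]; nlinarith
        linarith
      set k := Nat.find hex with hk
      have hk1 : r (k+1) ≤ dist y x := Nat.find_spec hex
      have hk2 : dist y x < r k := by
        rcases Nat.eq_zero_or_pos k with h0 | h0
        · rw [h0]; simpa [hr] using hyR
        · have hmin := Nat.find_min hex (show k - 1 < k from by omega)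
          push_neg at hmin
          have hkk : k - 1 + 1 = k := by omega
          rwa [hkk] at hmin
      exact ⟨k, hk2, not_lt.2 hk1⟩
  have hmain : IntegrableOn (fun y : Euc n => ‖y - x‖ ^ b) (Metric.ball x R \ {x}) volume := by
    rw [← hunion]
    exact integrableOn_iUnion_of_summable_integral_norm hAint hsum
  have hnull : IntegrableOn (fun y : Euc n => ‖y - x‖ ^ b) ({x} : Set (Euc n)) volume := by
    rw [IntegrableOn, Measure.restrict_eq_zero.2 (measure_singleton x)]
    exact integrable_zero_measure
  exact (hmain.union hnull).mono_set (by intro y hy; by_cases h : y = x <;> simp [h, hy])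
lemma integrable_one_add_shift (n : ℕ) {a : ℝ} (ha : (n:ℝ) < a) (x : Euc n) :
    Integrable (fun y : Euc n => (1 + ‖y - x‖) ^ (-a)) volume := by
  have h0 : Integrable (fun z : Euc n => (1 + ‖z‖) ^ (-a)) volume := by
    apply integrable_one_add_norm
    rwa [finrank_euclideanSpace_fin]
  have hmp : MeasurePreserving (fun y : Euc n => y - x) volume volume :=
    measurePreserving_sub_right volume x
  have hemb : MeasurableEmbedding (fun y : Euc n => y - x) :=
    (MeasurableEquiv.subRight x).measurableEmbedding
  have := (hmp.integrableOn_comp_preimage hemb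
    (f := fun z : Euc n => (1 + ‖z‖) ^ (-a)) (s := univ)).2 h0.integrableOn
  simpa [IntegrableOn, Measure.restrict_univ, Function.comp_def] using this

lemma integrableOn_rpow_compl_ball (n : ℕ) {a : ℝ} (ha : (n:ℝ) < a) (x : Euc n) {ε : ℝ}
    (hε : 0 < ε) :
    IntegrableOn (fun y : Euc n => ‖y - x‖ ^ (-a)) ((Metric.ball x ε)ᶜ) volume := by
  have ha0 : 0 < a := lt_of_le_of_lt (Nat.cast_nonneg n) ha
  have hdom : Integrable (fun y : Euc n => (1 + ε⁻¹) ^ a * (1 + ‖y - x‖) ^ (-a)) volume :=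
    (integrable_one_add_shift n ha x).const_mul _
  refine (hdom.integrableOn).mono' ?_ ?_
  · exact (Measurable.aestronglyMeasurable (by fun_prop)).restrict
  · rw [ae_restrict_iff' measurableSet_ball.compl]
    filter_upwards with y hy
    have ht : ε ≤ ‖y - x‖ := by
      rw [← dist_eq_norm]
      simpa [Metric.mem_ball] using hy
    set t := ‖y - x‖ with htdef
    have htpos : 0 < t := lt_of_lt_of_le hε ht
    rw [Real.norm_eq_abs, abs_of_nonneg (Real.rpow_nonneg (norm_nonneg _) _)]
    have key : (1 + t) ^ a ≤ ((1 + ε⁻¹) * t) ^ a := by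
      refine Real.rpow_le_rpow (by positivity) ?_ ha0.le
      have h1 : 1 ≤ ε⁻¹ * t := by
        have h2 := mul_le_mul_of_nonneg_left ht (inv_nonneg.2 hε.le)
        rwa [inv_mul_cancel₀ hε.ne'] at h2
      linarith
    rw [Real.rpow_neg htpos.le, Real.rpow_neg (by positivity : (0:ℝ) ≤ 1 + t)]
    rw [Real.mul_rpow (by positivity) htpos.le] at key
    have h1t : (0:ℝ) < (1 + t) ^ a := Real.rpow_pos_of_pos (by linarith) a
    have hta : (0:ℝ) < t ^ a := Real.rpow_pos_of_pos htpos a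
    have h2 : (1+t)^a * (t^a)⁻¹ ≤ (1+ε⁻¹)^a := by
      rw [← div_eq_mul_inv, div_le_iff₀ hta]
      linarith [key]
    calc (t^a)⁻¹ = ((1+t)^a * (t^a)⁻¹) * ((1+t)^a)⁻¹ := by field_simp
      _ ≤ (1+ε⁻¹)^a * ((1+t)^a)⁻¹ := mul_le_mul_of_nonneg_right h2 (by positivity)
lemma exists_bounds (n : ℕ) (Ω : Set (Euc n)) (hΩ : IsOpen Ω) (u : Euc n → ℝ)
    (hu : ContDiffOn ℝ 2 u Ω) (x : Euc n) {r : ℝ} (hr : 0 < r)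
    (hrΩ : Metric.closedBall x r ⊆ Ω) :
    ∃ L K : ℝ, 0 ≤ L ∧ 0 ≤ K ∧
      (∀ y ∈ Metric.closedBall x r, |u y - u x| ≤ L * ‖y - x‖) ∧
      (∀ h : Euc n, ‖h‖ ≤ r → |u (x + h) + u (x - h) - 2 * u x| ≤ K * ‖h‖ ^ 2) := by
  set v := fderiv ℝ u with hv
  have hv_cont : ContinuousOn v Ω := hu.continuousOn_fderiv_of_isOpen hΩ (by norm_num)
  have hv_cd : ContDiffOn ℝ 1 v Ω := hu.fderiv_of_isOpen hΩ (by norm_num)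
  set w := fderiv ℝ v with hw
  have hw_cont : ContinuousOn w Ω := hv_cd.continuousOn_fderiv_of_isOpen hΩ le_rfl
  obtain ⟨L₀, hL₀⟩ := (isCompact_closedBall x r).exists_bound_of_continuousOn (hv_cont.mono hrΩ)
  obtain ⟨K₀, hK₀⟩ := (isCompact_closedBall x r).exists_bound_of_continuousOn (f := w) (hw_cont.mono hrΩ)
  set L : ℝ := max L₀ 0 with hL
  set K₂ : ℝ := max K₀ 0 with hK₂
  have hudiff : ∀ y ∈ Metric.closedBall x r, HasFDerivAt u (v y) y := fun y hy =>
    ((hu.contDiffAt (hΩ.mem_nhds (hrΩ hy))).differentiableAt (by norm_num)).hasFDerivAt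
  have hvdiff : ∀ y ∈ Metric.closedBall x r, HasFDerivAt v (w y) y := fun y hy =>
    ((hv_cd.contDiffAt (hΩ.mem_nhds (hrΩ hy))).differentiableAt (by norm_num)).hasFDerivAt
  have hulip : ∀ y ∈ Metric.closedBall x r, |u y - u x| ≤ L * ‖y - x‖ := by
    intro y hy
    have := Convex.norm_image_sub_le_of_norm_hasFDerivWithin_le (f := u) (f' := v)
      (s := Metric.closedBall x r) (C := L)
      (fun z hz => (hudiff z hz).hasFDerivWithinAt)
      (fun z hz => le_trans (hL₀ z hz) (le_max_left _ _))
      (convex_closedBall x r) (Metric.mem_closedBall_self hr.le) hy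
    simpa [Real.norm_eq_abs] using this
  have hvlip : ∀ a ∈ Metric.closedBall x r, ∀ b ∈ Metric.closedBall x r,
      ‖v a - v b‖ ≤ K₂ * ‖a - b‖ := by
    intro a ha b hb
    exact Convex.norm_image_sub_le_of_norm_hasFDerivWithin_le
      (fun z hz => (hvdiff z hz).hasFDerivWithinAt)
      (fun z hz => le_trans (hK₀ z hz) (le_max_left _ _))
      (convex_closedBall x r) hb ha
  refine ⟨L, 2 * K₂, le_max_right _ _, by positivity, hulip, ?_⟩
  intro h hh
  have hmem : ∀ t : ℝ, t ∈ Icc (0:ℝ) 1 → ∀ σ : ℝ, |σ| ≤ 1 →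
      x + (t * σ) • h ∈ Metric.closedBall x r := by
    intro t ht σ hσ
    rw [Metric.mem_closedBall, dist_eq_norm, add_sub_cancel_left, norm_smul]
    calc ‖t * σ‖ * ‖h‖ ≤ 1 * r := by
          apply mul_le_mul _ hh (norm_nonneg _) zero_le_one
          rw [Real.norm_eq_abs, abs_mul]
          calc |t| * |σ| ≤ 1 * 1 := by
                apply mul_le_mul _ hσ (abs_nonneg _) zero_le_one
                rw [abs_of_nonneg ht.1]; exact ht.2
            _ = 1 := one_mul 1
      _ = r := one_mul r
  have hmem1 : ∀ t : ℝ, t ∈ Icc (0:ℝ) 1 → x + t • h ∈ Metric.closedBall x r := by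
    intro t ht
    have := hmem t ht 1 (by norm_num)
    simpa using this
  have hmem2 : ∀ t : ℝ, t ∈ Icc (0:ℝ) 1 → x - t • h ∈ Metric.closedBall x r := by
    intro t ht
    have := hmem t ht (-1) (by norm_num)
    have e : x + (t * (-1)) • h = x - t • h := by
      rw [mul_neg_one, neg_smul, ← sub_eq_add_neg]
    rwa [e] at this
  set φ : ℝ → ℝ := fun t => u (x + t • h) + u (x - t • h) with hφ
  have hφderiv : ∀ t ∈ Icc (0:ℝ) 1,
      HasDerivAt φ ((v (x + t • h)) h - (v (x - t • h)) h) t := by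
    intro t ht
    have l1 : HasDerivAt (fun t : ℝ => x + t • h) h t := by
      have := ((hasDerivAt_id t).smul_const h).const_add x
      simpa using this
    have l2 : HasDerivAt (fun t : ℝ => x - t • h) (-h) t := by
      have := ((hasDerivAt_id t).smul_const h).const_sub x
      simpa using this
    have d1 : HasDerivAt (fun t : ℝ => u (x + t • h)) ((v (x + t • h)) h) t :=
      (hudiff _ (hmem1 t ht)).comp_hasDerivAt t l1
    have d2 : HasDerivAt (fun t : ℝ => u (x - t • h)) ((v (x - t • h)) (-h)) t :=
      (hudiff _ (hmem2 t ht)).comp_hasDerivAt t l2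
    have := d1.add d2
    rwa [map_neg, ← sub_eq_add_neg] at this
  have hφbound : ∀ t ∈ Icc (0:ℝ) 1,
      ‖(v (x + t • h)) h - (v (x - t • h)) h‖ ≤ (2 * K₂) * ‖h‖ ^ 2 := by
    intro t ht
    have e : (v (x + t • h)) h - (v (x - t • h)) h = (v (x + t • h) - v (x - t • h)) h := by
      simp
    rw [e]
    calc ‖(v (x + t • h) - v (x - t • h)) h‖
        ≤ ‖v (x + t • h) - v (x - t • h)‖ * ‖h‖ := ContinuousLinearMap.le_opNorm _ h
      _ ≤ (K₂ * ‖(x + t • h) - (x - t • h)‖) * ‖h‖ := by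
          apply mul_le_mul_of_nonneg_right _ (norm_nonneg h)
          exact hvlip _ (hmem1 t ht) _ (hmem2 t ht)
      _ ≤ (2 * K₂) * ‖h‖ ^ 2 := by
          have e2 : (x + t • h) - (x - t • h) = (2 * t) • h := by
            rw [two_mul]; module
          rw [e2, norm_smul, Real.norm_eq_abs, abs_mul, abs_two, abs_of_nonneg ht.1]
          have h1 := ht.1
          have h2 := ht.2
          have h3 := norm_nonneg h
          have h4 : 0 ≤ K₂ := le_max_right _ _
          have h5 : ‖h‖ ^ 2 = ‖h‖ * ‖h‖ := pow_two ‖h‖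
          nlinarith [mul_nonneg (mul_nonneg h4 (sub_nonneg.2 h2)) (mul_nonneg h3 h3)]
  have key := Convex.norm_image_sub_le_of_norm_hasDerivWithin_le
    (f := φ) (f' := fun t => (v (x + t • h)) h - (v (x - t • h)) h)
    (s := Icc (0:ℝ) 1) (C := (2 * K₂) * ‖h‖ ^ 2)
    (fun t ht => (hφderiv t ht).hasDerivWithinAt)
    (fun t ht => hφbound t ht)
    (convex_Icc 0 1) (left_mem_Icc.2 zero_le_one) (right_mem_Icc.2 zero_le_one)
  have e1 : φ 1 = u (x + h) + u (x - h) := by simp [hφ]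
  have e0 : φ 0 = 2 * u x := by
    simp [hφ]
    ring
  rw [e1, e0] at key
  simp only [Real.norm_eq_abs] at key
  calc |u (x + h) + u (x - h) - 2 * u x| ≤ (2 * K₂) * ‖h‖ ^ 2 * |(1:ℝ) - 0| := key
    _ = (2 * K₂) * ‖h‖ ^ 2 := by norm_num

lemma f_contOn (n : ℕ) (s p : ℝ) (hp : 2 ≤ p) (Ω : Set (Euc n)) (u : Euc n → ℝ)
    (hucont : ContinuousOn u Ω) (x : Euc n) :
    ContinuousOn
      (fun y => |u x - u y| ^ (p - 2) * (u x - u y) / ‖x - y‖ ^ ((n : ℝ) + s * p))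
      (Ω \ {x}) := by
  have hnum : ContinuousOn (fun y => |u x - u y| ^ (p - 2) * (u x - u y)) (Ω \ {x}) := by
    have h1 : ContinuousOn (fun y => u x - u y) (Ω \ {x}) :=
      continuousOn_const.sub (hucont.mono diff_subset)
    exact (g_cont hp).comp_continuousOn h1
  have hden : ContinuousOn (fun y : Euc n => ‖x - y‖ ^ ((n : ℝ) + s * p)) (Ω \ {x}) := by
    refine ContinuousOn.rpow_const ((continuousOn_const.sub continuousOn_id).norm) ?_
    intro y hy
    left
    rw [norm_ne_zero_iff, sub_ne_zero]
    exact fun h => hy.2 h.symm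
  exact hnum.div hden (fun y hy => by
    apply ne_of_gt
    apply Real.rpow_pos_of_pos
    rw [norm_pos_iff, sub_ne_zero]
    exact fun h => hy.2 h.symm)

lemma partA (n : ℕ) (s p : ℝ) (hs0 : 0 < s) (hp : 2 ≤ p)
    (Ω : Set (Euc n)) (hΩ : IsOpen Ω)
    (u : Euc n → ℝ) (hucont : ContinuousOn u Ω) {M : ℝ} (hM : ∀ x ∈ Ω, |u x| ≤ M)
    (x : Euc n) (hx : x ∈ Ω) {ε : ℝ} (hε : 0 < ε) :
    IntegrableOn
        (fun y => |u x - u y| ^ (p - 2) * (u x - u y) / ‖x - y‖ ^ ((n : ℝ) + s * p))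
        (Ω \ Metric.ball x ε) volume := by
  have hp0 : 0 < p := by linarith
  have hq : (n:ℝ) < (n:ℝ) + s * p := by nlinarith
  have hM0 : 0 ≤ M := le_trans (abs_nonneg _) (hM x hx)
  have hdom : IntegrableOn
      (fun y : Euc n => (2*M) ^ (p-1) * ‖y - x‖ ^ (-((n:ℝ) + s * p)))
      (Ω \ Metric.ball x ε) volume := by
    refine IntegrableOn.mono_set ((integrableOn_rpow_compl_ball n hq x hε).const_mul _) ?_
    intro y hy
    exact hy.2
  refine hdom.mono' ?_ ?_
  · have hsub : Ω \ Metric.ball x ε ⊆ Ω \ {x} := by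
      intro y hy
      exact ⟨hy.1, fun h => hy.2 (by rw [h]; exact Metric.mem_ball_self hε)⟩
    exact ((f_contOn n s p hp Ω u hucont x).mono hsub).aestronglyMeasurable
      (hΩ.measurableSet.diff measurableSet_ball)
  · rw [ae_restrict_iff' (hΩ.measurableSet.diff measurableSet_ball)]
    filter_upwards with y hy
    have hyx : ε ≤ ‖y - x‖ := by
      rw [← dist_eq_norm]
      simpa [Metric.mem_ball] using hy.2
    have hpos : (0:ℝ) < ‖y - x‖ := lt_of_lt_of_le hε hyx
    have hnorm : ‖x - y‖ = ‖y - x‖ := norm_sub_rev x y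
    rw [Real.norm_eq_abs, abs_div, abs_of_nonneg (Real.rpow_nonneg (norm_nonneg _) _),
      g_abs hp, hnorm, div_eq_mul_inv, ← Real.rpow_neg hpos.le]
    apply mul_le_mul_of_nonneg_right _ (Real.rpow_nonneg hpos.le _)
    refine Real.rpow_le_rpow (abs_nonneg _) ?_ (by linarith)
    calc |u x - u y| ≤ |u x| + |u y| := abs_sub _ _
      _ ≤ M + M := add_le_add (hM x hx) (hM y hy.1)
      _ = 2 * M := by ring

/-- The regional `(s,p)`-Laplacian is well defined at every point of `Ω` for
`u ∈ C²(Ω) ∩ L^∞(Ω)` and `2 ≤ p < ∞`. -/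
theorem regional_pLaplacian_well_defined
    (n : ℕ) (s p : ℝ) (hs0 : 0 < s) (hs1 : s < 1) (hp : 2 ≤ p)
    (Ω : Set (Euc n)) (hΩ : IsOpen Ω)
    (u : Euc n → ℝ) (hu : ContDiffOn ℝ 2 u Ω) (hub : ∃ M : ℝ, ∀ x ∈ Ω, |u x| ≤ M)
    (x : Euc n) (hx : x ∈ Ω) :
    (∀ ε > (0:ℝ), IntegrableOn
        (fun y => |u x - u y| ^ (p - 2) * (u x - u y) / ‖x - y‖ ^ ((n : ℝ) + s * p))
        (Ω \ Metric.ball x ε) volume) ∧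
    ∃ L : ℝ, Tendsto
      (fun ε : ℝ => ∫ y in Ω \ Metric.ball x ε,
        |u x - u y| ^ (p - 2) * (u x - u y) / ‖x - y‖ ^ ((n : ℝ) + s * p))
      (𝓝[>] (0:ℝ)) (𝓝 L) := by
  obtain ⟨M, hM⟩ := hub
  set f : Euc n → ℝ :=
    fun y => |u x - u y| ^ (p - 2) * (u x - u y) / ‖x - y‖ ^ ((n : ℝ) + s * p) with hf
  -- trivial case n = 0
  rcases Nat.eq_zero_or_pos n with hn0 | hn
  · subst hn0
    haveI : Subsingleton (Euc 0) := ⟨fun a b => by ext i; exact i.elim0⟩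
    have hball : ∀ ε : ℝ, 0 < ε → Ω \ Metric.ball x ε = ∅ := by
      intro ε hε
      ext y
      simp only [mem_diff, mem_empty_iff_false, iff_false, not_and, not_not]
      intro _
      have : y = x := Subsingleton.elim y x
      rw [this]
      exact Metric.mem_ball_self hε
    refine ⟨fun ε hε => by rw [hball ε hε]; exact integrableOn_empty, 0, ?_⟩
    refine Tendsto.congr' ?_ tendsto_const_nhds
    filter_upwards [self_mem_nhdsWithin] with ε hε
    rw [hball ε hε]
    simp
  -- main case n ≥ 1
  haveI : Nonempty (Fin n) := ⟨⟨0, hn⟩⟩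
  have hintA : ∀ ε > (0:ℝ), IntegrableOn f (Ω \ Metric.ball x ε) volume :=
    fun ε hε => partA n s p hs0 hp Ω hΩ u hu.continuousOn hM x hx hε
  refine ⟨hintA, ?_⟩
  obtain ⟨r, hr0, hrΩ⟩ : ∃ r > 0, Metric.closedBall x r ⊆ Ω := by
    rcases (Metric.nhds_basis_closedBall.mem_iff).1 (hΩ.mem_nhds hx) with ⟨r, hr0, hr⟩
    exact ⟨r, hr0, hr⟩
  obtain ⟨L, K, hL0, hK0, hulip, hu2⟩ := exists_bounds n Ω hΩ u hu x hr0 hrΩ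
  have hballΩ : Metric.ball x r ⊆ Ω := fun y hy => hrΩ (Metric.ball_subset_closedBall hy)
  have hp0 : (0:ℝ) < p := by linarith
  set q : ℝ := (n:ℝ) + s * p with hq
  set b : ℝ := p - q with hb
  have hbn : -(n:ℝ) < b := by
    rw [hb, hq]
    nlinarith [mul_pos hs0 hp0]
  set C : ℝ := (p - 1) * L ^ (p - 2) * K with hC
  have hC0 : 0 ≤ C := by
    apply mul_nonneg (mul_nonneg (by linarith) (Real.rpow_nonneg hL0 _)) hK0
  set T : Euc n → Euc n := fun y => (x + x) - y with hT
  have hTinv : ∀ y, T (T y) = y := fun y => by simp [hT]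
  have hTdist : ∀ y, dist (T y) x = dist y x := fun y => by
    rw [dist_eq_norm, dist_eq_norm]
    have e : T y - x = -(y - x) := by simp [hT]; abel
    rw [e, norm_neg]
  have hTmp : MeasurePreserving T volume volume :=
    Measure.measurePreserving_sub_left volume (x + x)
  have hTemb : MeasurableEmbedding T :=
    (MeasurableEquiv.subLeft (x + x)).measurableEmbedding
  set G : Euc n → ℝ := fun y => f y + f (T y) with hG
  -- pointwise bound on G
  have hGbound : ∀ y ∈ Metric.ball x r \ {x}, |G y| ≤ C * ‖y - x‖ ^ b := by
    intro y hy
    set h : Euc n := y - x with hh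
    have hne : h ≠ 0 := sub_ne_zero.2 (fun e => hy.2 (by simp [e]))
    have hpos : (0:ℝ) < ‖h‖ := norm_pos_iff.2 hne
    have hlt : ‖h‖ < r := by
      rw [hh, ← dist_eq_norm]
      exact Metric.mem_ball.1 hy.1
    have hyxh : y = x + h := by rw [hh]; abel
    have hTy : T y = x - h := by rw [hT, hh]; abel_nf
    have hxy : x - y = -h := by rw [hh]; abel
    have hxTy : x - T y = h := by rw [hTy]; abel
    -- numerator estimates
    have ha₁ : |u x - u (x + h)| ≤ L * ‖h‖ := by
      have := hulip (x + h) (by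
        rw [Metric.mem_closedBall, dist_eq_norm, add_sub_cancel_left]
        exact hlt.le)
      rw [add_sub_cancel_left] at this
      rw [abs_sub_comm]
      exact this
    have hb₁ : |u (x - h) - u x| ≤ L * ‖h‖ := by
      have := hulip (x - h) (by
        rw [Metric.mem_closedBall, dist_eq_norm]
        have e : x - h - x = -h := by abel
        rw [e, norm_neg]
        exact hlt.le)
      have e : x - h - x = -h := by abel
      rwa [e, norm_neg] at this
    have hdiff : |(u x - u (x + h)) - (u (x - h) - u x)| ≤ K * ‖h‖ ^ 2 := by
      have e : (u x - u (x + h)) - (u (x - h) - u x) = -(u (x + h) + u (x - h) - 2 * u x) := by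
        ring
      rw [e, abs_neg]
      exact hu2 h hlt.le
    have hnum : |(|u x - u (x + h)| ^ (p-2) * (u x - u (x + h)))
        + (|u x - u (x - h)| ^ (p-2) * (u x - u (x - h)))|
        ≤ (p - 1) * (L * ‖h‖) ^ (p - 2) * (K * ‖h‖ ^ 2) := by
      have hodd : |u x - u (x - h)| ^ (p-2) * (u x - u (x - h))
          = -(|u (x - h) - u x| ^ (p-2) * (u (x - h) - u x)) := by
        have e : u x - u (x - h) = -(u (x - h) - u x) := by ring
        rw [e, g_neg]
      rw [hodd, ← sub_eq_add_neg]
      calc |(|u x - u (x + h)| ^ (p-2) * (u x - u (x + h)))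
            - (|u (x - h) - u x| ^ (p-2) * (u (x - h) - u x))|
          ≤ (p - 1) * (L * ‖h‖) ^ (p - 2) * |(u x - u (x + h)) - (u (x - h) - u x)| :=
            g_lip hp ha₁ hb₁
        _ ≤ (p - 1) * (L * ‖h‖) ^ (p - 2) * (K * ‖h‖ ^ 2) := by
            apply mul_le_mul_of_nonneg_left hdiff
            apply mul_nonneg (by linarith) (Real.rpow_nonneg (by positivity) _)
    -- assemble
    have hfy : f y = (|u x - u (x + h)| ^ (p-2) * (u x - u (x + h))) / ‖h‖ ^ q := by
      rw [hf]
      simp only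
      rw [← hyxh, hxy, norm_neg]
    have hfTy : f (T y) = (|u x - u (x - h)| ^ (p-2) * (u x - u (x - h))) / ‖h‖ ^ q := by
      rw [hf]
      simp only
      rw [hxTy, hTy]
    have hGy : G y = ((|u x - u (x + h)| ^ (p-2) * (u x - u (x + h)))
        + (|u x - u (x - h)| ^ (p-2) * (u x - u (x - h)))) / ‖h‖ ^ q := by
      rw [hG]
      simp only
      rw [hfy, hfTy, ← add_div]
    rw [hGy, abs_div, abs_of_nonneg (Real.rpow_nonneg (norm_nonneg _) _)]
    rw [div_le_iff₀ (Real.rpow_pos_of_pos hpos q)]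
    calc |(|u x - u (x + h)| ^ (p-2) * (u x - u (x + h)))
          + (|u x - u (x - h)| ^ (p-2) * (u x - u (x - h)))|
        ≤ (p - 1) * (L * ‖h‖) ^ (p - 2) * (K * ‖h‖ ^ 2) := hnum
      _ = C * ‖h‖ ^ b * ‖h‖ ^ q := by
          rw [Real.mul_rpow hL0 (norm_nonneg _), hC]
          rw [show ‖h‖ ^ 2 = ‖h‖ ^ ((2:ℕ):ℝ) from (Real.rpow_natCast _ 2).symm]
          rw [hb]
          rw [show C * ‖h‖ ^ (p - q) * ‖h‖ ^ q = C * (‖h‖ ^ (p - q) * ‖h‖ ^ q) from by ring,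
            ← Real.rpow_add hpos, sub_add_cancel, hC]
          rw [show (p - 1) * (L ^ (p-2) * ‖h‖ ^ (p-2)) * (K * ‖h‖ ^ ((2:ℕ):ℝ))
            = ((p - 1) * L ^ (p-2) * K) * (‖h‖ ^ (p-2) * ‖h‖ ^ ((2:ℕ):ℝ)) from by ring,
            ← Real.rpow_add hpos]
          norm_num
      _ = C * ‖y - x‖ ^ b * ‖h‖ ^ q := by rw [hh]
  -- integrability of G
  have hfc : ContinuousOn f (Ω \ {x}) := f_contOn n s p hp Ω u hu.continuousOn x
  have hTmaps : ∀ y ∈ Metric.ball x r \ {x}, T y ∈ Ω \ {x} := by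
    intro y hy
    constructor
    · apply hballΩ
      rw [Metric.mem_ball, hTdist]
      exact hy.1
    · intro hTyx
      apply hy.2
      have := hTdist y
      rw [hTyx, dist_self] at this
      exact dist_eq_zero.1 this.symm
  have hGmeasSet : MeasurableSet (Metric.ball x r \ {x}) :=
    measurableSet_ball.diff (measurableSet_singleton x)
  have hGc : ContinuousOn G (Metric.ball x r \ {x}) := by
    apply ContinuousOn.add
    · exact hfc.mono (fun y hy => ⟨hballΩ hy.1, hy.2⟩)
    · exact hfc.comp ((continuous_const.sub continuous_id).continuousOn) hTmaps
  have hGint : IntegrableOn G (Metric.ball x r \ {x}) volume := by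
    refine Integrable.mono'
      ((show IntegrableOn (fun y : Euc n => C * ‖y - x‖ ^ b) (Metric.ball x r) volume from
        (integrableOn_rpow_ball n hbn x r).const_mul C).mono_set diff_subset)
      (hGc.aestronglyMeasurable hGmeasSet) ?_
    rw [ae_restrict_iff' hGmeasSet]
    filter_upwards with y hy
    rw [Real.norm_eq_abs]
    exact hGbound y hy
  -- limit value
  set A₀ : ℝ := ∫ y in Ω \ Metric.ball x r, f y with hA₀
  set B₀ : ℝ := ∫ y in Metric.ball x r \ {x}, G y with hB₀
  set χ : ℝ → ℝ := fun ε => ∫ y in Metric.ball x ε \ {x}, G y with hχdef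
  -- key identity
  have key : ∀ ε ∈ Ioo (0:ℝ) r,
      (∫ y in Ω \ Metric.ball x ε, f y) = A₀ + (1/2) * (B₀ - χ ε) := by
    intro ε hε
    have hballmono : Metric.ball x ε ⊆ Metric.ball x r := Metric.ball_subset_ball hε.2.le
    have hsplit : Ω \ Metric.ball x ε
        = (Ω \ Metric.ball x r) ∪ (Metric.ball x r \ Metric.ball x ε) := by
      ext y
      simp only [mem_diff, mem_union]
      constructor
      · rintro ⟨hyΩ, hyε⟩
        by_cases hyr : y ∈ Metric.ball x r
        · exact Or.inr ⟨hyr, hyε⟩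
        · exact Or.inl ⟨hyΩ, hyr⟩
      · rintro (⟨hyΩ, hyr⟩ | ⟨hyr, hyε⟩)
        · exact ⟨hyΩ, fun hyε => hyr (hballmono hyε)⟩
        · exact ⟨hballΩ hyr, hyε⟩
    have hdisj : Disjoint (Ω \ Metric.ball x r) (Metric.ball x r \ Metric.ball x ε) := by
      rw [Set.disjoint_left]
      rintro y ⟨_, hyr⟩ ⟨hyr', _⟩
      exact hyr hyr'
    have h_int1 : IntegrableOn f (Ω \ Metric.ball x r) volume := hintA r hr0
    have h_int2 : IntegrableOn f (Metric.ball x r \ Metric.ball x ε) volume := by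
      refine (hintA ε hε.1).mono_set ?_
      rintro y ⟨hyr, hyε⟩
      exact ⟨hballΩ hyr, hyε⟩
    have step1 : (∫ y in Ω \ Metric.ball x ε, f y)
        = (∫ y in Ω \ Metric.ball x r, f y)
          + ∫ y in Metric.ball x r \ Metric.ball x ε, f y := by
      rw [hsplit]
      exact setIntegral_union hdisj (measurableSet_ball.diff measurableSet_ball) h_int1 h_int2
    -- reflection
    have hTpre : T ⁻¹' (Metric.ball x r \ Metric.ball x ε)
        = Metric.ball x r \ Metric.ball x ε := by
      ext y
      simp only [mem_preimage, mem_diff, Metric.mem_ball, hTdist]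
    have hTimg : T '' (Metric.ball x r \ Metric.ball x ε)
        = Metric.ball x r \ Metric.ball x ε := by
      apply Set.Subset.antisymm
      · rintro z ⟨w, hw, rfl⟩
        simp only [mem_diff, Metric.mem_ball, hTdist] at hw ⊢
        exact hw
      · intro z hz
        refine ⟨T z, ?_, hTinv z⟩
        simp only [mem_diff, Metric.mem_ball, hTdist] at hz ⊢
        exact hz
    have step2 : (∫ y in Metric.ball x r \ Metric.ball x ε, f (T y))
        = ∫ y in Metric.ball x r \ Metric.ball x ε, f y := by
      have := hTmp.setIntegral_image_emb hTemb f (Metric.ball x r \ Metric.ball x ε)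
      rw [hTimg] at this
      exact this.symm
    have h_int3 : IntegrableOn (fun y => f (T y)) (Metric.ball x r \ Metric.ball x ε)
        volume := by
      have := (hTmp.integrableOn_comp_preimage hTemb
        (f := f) (s := Metric.ball x r \ Metric.ball x ε)).2 h_int2
      rwa [hTpre] at this
    have step3 : (∫ y in Metric.ball x r \ Metric.ball x ε, G y)
        = 2 * ∫ y in Metric.ball x r \ Metric.ball x ε, f y := by
      calc (∫ y in Metric.ball x r \ Metric.ball x ε, G y)
          = (∫ y in Metric.ball x r \ Metric.ball x ε, f y)
            + ∫ y in Metric.ball x r \ Metric.ball x ε, f (T y) :=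
            integral_add h_int2 h_int3
        _ = 2 * ∫ y in Metric.ball x r \ Metric.ball x ε, f y := by rw [step2]; ring
    have hsubdiff : Metric.ball x ε \ {x} ⊆ Metric.ball x r \ {x} := by
      rintro y ⟨hy1, hy2⟩
      exact ⟨hballmono hy1, hy2⟩
    have hdiffset : (Metric.ball x r \ {x}) \ (Metric.ball x ε \ {x})
        = Metric.ball x r \ Metric.ball x ε := by
      ext y
      simp only [mem_diff, mem_singleton_iff]
      constructor
      · rintro ⟨⟨hyr, hyx⟩, hy2⟩
        refine ⟨hyr, fun hyε => hy2 ⟨hyε, hyx⟩⟩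
      · rintro ⟨hyr, hyε⟩
        have hyx : y ≠ x := fun e => hyε (by rw [e]; exact Metric.mem_ball_self hε.1)
        exact ⟨⟨hyr, hyx⟩, fun h => hyε h.1⟩
    have step4 : (∫ y in Metric.ball x r \ Metric.ball x ε, G y) = B₀ - χ ε := by
      rw [← hdiffset]
      exact integral_diff (measurableSet_ball.diff (measurableSet_singleton x)) hGint hsubdiff
    rw [step1, ← hA₀]
    have := step4 ▸ step3
    linarith [this]
  -- χ tends to 0
  have hd_nonneg : ∀ y : Euc n, 0 ≤ C * ‖y - x‖ ^ b :=
    fun y => mul_nonneg hC0 (Real.rpow_nonneg (norm_nonneg _) _)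
  have hdint : ∀ R : ℝ, IntegrableOn (fun y : Euc n => C * ‖y - x‖ ^ b) (Metric.ball x R)
      volume := fun R => (integrableOn_rpow_ball n hbn x R).const_mul C
  have hχ0 : Tendsto χ (𝓝[>] (0:ℝ)) (𝓝 0) := by
    rw [Metric.tendsto_nhdsWithin_nhds]
    intro δ hδ
    -- find a small ball with small integral of the dominating function
    set S : ℕ → Set (Euc n) := fun k => Metric.ball x (1/(k+1)) with hS
    have hanti : Antitone S := by
      intro k m hkm
      apply Metric.ball_subset_ball
      apply one_div_le_one_div_of_le (by positivity)
      exact_mod_cast add_le_add_left (Nat.cast_le.2 hkm) 1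
    have hScap : (⋂ k, S k) = {x} := by
      ext y
      simp only [mem_iInter, hS, Metric.mem_ball, mem_singleton_iff]
      constructor
      · intro hall
        by_contra hne
        have hd : 0 < dist y x := dist_pos.2 hne
        obtain ⟨k, hk⟩ := exists_nat_one_div_lt hd
        exact absurd (hall k) (not_lt.2 (by exact_mod_cast hk.le))
      · intro e
        rw [e, dist_self]
        intro k
        positivity
    have htend := tendsto_setIntegral_of_antitone (f := fun y : Euc n => C * ‖y - x‖ ^ b)
      (μ := volume) (fun k => measurableSet_ball) hanti ⟨0, hdint _⟩
    rw [hScap] at htend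
    have hzero : (∫ y in ({x} : Set (Euc n)), C * ‖y - x‖ ^ b ∂volume) = 0 := by
      rw [Measure.restrict_eq_zero.2 (measure_singleton x)]
      exact integral_zero_measure _
    rw [hzero] at htend
    obtain ⟨k, hk⟩ := (htend.eventually (gt_mem_nhds hδ)).exists
    refine ⟨min (1/(k+1)) r, lt_min (by positivity) hr0, ?_⟩
    intro ε hεpos hεdist
    rw [Real.dist_eq, sub_zero, abs_of_pos hεpos] at hεdist
    have hεk : ε < 1/(k+1) := lt_of_lt_of_le hεdist (min_le_left _ _)
    have hεr : ε < r := lt_of_lt_of_le hεdist (min_le_right _ _)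
    rw [Real.dist_eq, sub_zero]
    have hsub1 : Metric.ball x ε \ {x} ⊆ Metric.ball x r \ {x} := by
      rintro y ⟨hy1, hy2⟩
      exact ⟨Metric.ball_subset_ball hεr.le hy1, hy2⟩
    have hGint' : IntegrableOn G (Metric.ball x ε \ {x}) volume := hGint.mono_set hsub1
    calc |χ ε| ≤ ∫ y in Metric.ball x ε \ {x}, |G y| := by
          rw [hχdef]
          simpa [Real.norm_eq_abs] using
            norm_integral_le_integral_norm (μ := volume.restrict (Metric.ball x ε \ {x})) G
      _ ≤ ∫ y in Metric.ball x ε \ {x}, C * ‖y - x‖ ^ b := by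
          refine setIntegral_mono_on hGint'.abs ((hdint ε).mono_set diff_subset)
            (measurableSet_ball.diff (measurableSet_singleton x)) ?_
          intro y hy
          exact hGbound y (hsub1 hy)
      _ ≤ ∫ y in S k, C * ‖y - x‖ ^ b := by
          refine setIntegral_mono_set (hdint _) ?_ ?_
          · filter_upwards with y using hd_nonneg y
          · have hsub2 : Metric.ball x ε \ {x} ⊆ S k := fun y hy =>
              Metric.ball_subset_ball hεk.le hy.1
            exact HasSubset.Subset.eventuallyLE hsub2
      _ < δ := hk
  -- conclude
  refine ⟨A₀ + (1/2) * B₀, ?_⟩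
  have hev : (fun ε : ℝ => ∫ y in Ω \ Metric.ball x ε, f y) =ᶠ[𝓝[>] (0:ℝ)]
      (fun ε => A₀ + (1/2) * (B₀ - χ ε)) := by
    filter_upwards [Ioo_mem_nhdsGT_of_mem (Set.mem_Ico.2 ⟨le_refl 0, hr0⟩)] with ε hε
    exact key ε hε
  have hlim : Tendsto (fun ε => A₀ + (1/2) * (B₀ - χ ε)) (𝓝[>] (0:ℝ))
      (𝓝 (A₀ + (1/2) * (B₀ - 0))) :=
    tendsto_const_nhds.add ((tendsto_const_nhds.sub hχ0).const_mul _)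
  rw [sub_zero] at hlim
  exact hlim.congr' hev.symm
end
end

section
/- Let 0<s<1 and 1<p<∞ be fixed and let Ω⊂ℝⁿ be a bounded open set such that the embedding W^{s,p}(Ω)⊂L^p(Ω) is compact (e.g. Ω has Lipschitz boundary). Let φ∈L^∞(Ω) be nonnegative with φ not identically zero (∫_Ω φ dx > 0), and let σ>0. Then there exists a constant κ>0 such that λ_s(σ,φ) ≥ κ; equivalently, there exists C>0 such that ∫_Ω |v|^p dx ≤ C[(1/2)∬_{Ω×Ω} |v(x)-v(y)|^p/|x-y|^{n+sp} dx dy + σ∫_Ω |v|^p φ dx] for every v∈W^{s,p}(Ω). -/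
open MeasureTheory Filter Topology Set
open scoped ENNReal NNReal

noncomputable section

/-- `p`-th power of the Gagliardo seminorm of `u` on `Ω`. -/
def gagliardo (n : ℕ) (s p : ℝ) (Ω : Set (Euc n)) (u : Euc n → ℝ) : ℝ :=
  ∫ z in Ω ×ˢ Ω, |u z.1 - u z.2| ^ p / ‖z.1 - z.2‖ ^ ((n : ℝ) + s * p)

/-- `u` belongs to the fractional Sobolev space `W^{s,p}(Ω)`. -/
def inFracSobolev (n : ℕ) (s p : ℝ) (Ω : Set (Euc n)) (u : Euc n → ℝ) : Prop :=
  MemLp u (ENNReal.ofReal p) (volume.restrict Ω) ∧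
  IntegrableOn
    (fun z : Euc n × Euc n => |u z.1 - u z.2| ^ p / ‖z.1 - z.2‖ ^ ((n : ℝ) + s * p))
    (Ω ×ˢ Ω) volume

/-- Rayleigh quotients for the soft obstacle eigenvalue `λ_s(σ,φ)`. -/
def lambdaSigmaSet (n : ℕ) (s p : ℝ) (Ω : Set (Euc n)) (σ : ℝ) (φ : Euc n → ℝ) : Set ℝ :=
  { r | ∃ u : Euc n → ℝ, inFracSobolev n s p Ω u ∧ 0 < ∫ x in Ω, |u x| ^ p ∧
      r = (gagliardo n s p Ω u / 2 + σ * ∫ x in Ω, |u x| ^ p * φ x) / ∫ x in Ω, |u x| ^ p }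

/-- The soft obstacle eigenvalue `λ_s(σ,φ)`. -/
def lambdaSigma (n : ℕ) (s p : ℝ) (Ω : Set (Euc n)) (σ : ℝ) (φ : Euc n → ℝ) : ℝ :=
  sInf (lambdaSigmaSet n s p Ω σ φ)

/-- The embedding `W^{s,p}(Ω) ⊆ L^p(Ω)` is compact: every sequence bounded in the
`W^{s,p}(Ω)`-norm has a subsequence converging strongly in `L^p(Ω)`. -/
def CompactEmbeddingWsp (n : ℕ) (s p : ℝ) (Ω : Set (Euc n)) : Prop :=
  ∀ (u : ℕ → Euc n → ℝ) (M : ℝ),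
    (∀ k, inFracSobolev n s p Ω (u k)) →
    (∀ k, (∫ x in Ω, |u k x| ^ p) + gagliardo n s p Ω (u k) ≤ M) →
    ∃ (v : Euc n → ℝ) (φ : ℕ → ℕ),
      MemLp v (ENNReal.ofReal p) (volume.restrict Ω) ∧ StrictMono φ ∧
      Tendsto (fun k => ∫ x in Ω, |u (φ k) x - v x| ^ p) atTop (𝓝 0)

/- ### Auxiliary lemmas -/

private lemma abs_mul_rpow (p t a : ℝ) (ht : 0 ≤ t) :
    |t * a| ^ p = t ^ p * |a| ^ p := by
  rw [abs_mul, abs_of_nonneg ht, Real.mul_rpow ht (abs_nonneg a)]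

private lemma gagliardo_nonneg (n : ℕ) (s p : ℝ) (Ω : Set (Euc n)) (u : Euc n → ℝ) :
    0 ≤ gagliardo n s p Ω u :=
  integral_nonneg fun z => div_nonneg (Real.rpow_nonneg (abs_nonneg _) _)
    (Real.rpow_nonneg (norm_nonneg _) _)

private lemma gagliardo_smul (n : ℕ) (s p : ℝ) (Ω : Set (Euc n)) (u : Euc n → ℝ)
    (t : ℝ) (ht : 0 ≤ t) :
    gagliardo n s p Ω (fun x => t * u x) = t ^ p * gagliardo n s p Ω u := by
  simp only [gagliardo]
  rw [← integral_const_mul]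
  congr 1
  funext z
  rw [← mul_sub, abs_mul_rpow _ _ _ ht, mul_div_assoc]

private lemma int_weight_smul (n : ℕ) (p t : ℝ) (ht : 0 ≤ t) (Ω : Set (Euc n))
    (u w : Euc n → ℝ) :
    ∫ x in Ω, |t * u x| ^ p * w x = t ^ p * ∫ x in Ω, |u x| ^ p * w x := by
  rw [← integral_const_mul]
  congr 1
  funext x
  rw [abs_mul_rpow _ _ _ ht, mul_assoc]

private lemma int_smul (n : ℕ) (p t : ℝ) (ht : 0 ≤ t) (Ω : Set (Euc n)) (u : Euc n → ℝ) :
    ∫ x in Ω, |t * u x| ^ p = t ^ p * ∫ x in Ω, |u x| ^ p := by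
  rw [← integral_const_mul]
  congr 1
  funext x
  rw [abs_mul_rpow _ _ _ ht]

private lemma integrable_abs_rpow {n : ℕ} {p : ℝ} (hp : 1 < p) {Ω : Set (Euc n)}
    {u : Euc n → ℝ} (hu : MemLp u (ENNReal.ofReal p) (volume.restrict Ω)) :
    Integrable (fun x => |u x| ^ p) (volume.restrict Ω) := by
  have hp0 : (0:ℝ) < p := lt_trans one_pos hp
  have h := hu.integrable_norm_rpow (by simp [ENNReal.ofReal_eq_zero, not_le, hp0])
    ENNReal.ofReal_ne_top
  have heq : (fun x => ‖u x‖ ^ (ENNReal.ofReal p).toReal) = fun x => |u x| ^ p := by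
    funext x
    rw [Real.norm_eq_abs, ENNReal.toReal_ofReal hp0.le]
  rwa [heq] at h

private lemma integrable_abs_rpow_mul {n : ℕ} {p : ℝ} (hp : 1 < p) {Ω : Set (Euc n)}
    {u φ : Euc n → ℝ} (hu : MemLp u (ENNReal.ofReal p) (volume.restrict Ω))
    (hφ : MemLp φ ⊤ (volume.restrict Ω)) :
    Integrable (fun x => |u x| ^ p * φ x) (volume.restrict Ω) := by
  have h1 := integrable_abs_rpow hp hu
  have hessne : eLpNormEssSup φ (volume.restrict Ω) ≠ ⊤ := by
    have := hφ.2
    rwa [eLpNorm_exponent_top, lt_top_iff_ne_top] at this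
  have hC : ∀ᵐ x ∂(volume.restrict Ω),
      ‖φ x‖ ≤ (eLpNormEssSup φ (volume.restrict Ω)).toReal := by
    filter_upwards [ae_le_eLpNormEssSup (f := φ) (μ := volume.restrict Ω)] with x hx
    have hxx : ‖φ x‖ = ((‖φ x‖₊ : ℝ≥0∞)).toReal := by simp
    rw [hxx]
    exact ENNReal.toReal_mono hessne hx
  have h2 := h1.bdd_mul hφ.aestronglyMeasurable hC
  have heq : (fun x => φ x * |u x| ^ p) = fun x => |u x| ^ p * φ x := by
    funext x; ring
  rwa [heq] at h2

private lemma aemeasurable_ennreal_tsum {α : Type*} [MeasurableSpace α] {μ : Measure α}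
    {f : ℕ → α → ENNReal} (h : ∀ i, AEMeasurable (f i) μ) :
    AEMeasurable (fun x => ∑' i, f i x) μ := by
  refine ⟨fun x => ∑' i, (h i).mk _ x,
    Measurable.ennreal_tsum fun i => (h i).measurable_mk, ?_⟩
  have hae : ∀ᵐ x ∂μ, ∀ i, f i x = (h i).mk _ x := ae_all_iff.2 fun i => (h i).ae_eq_mk
  filter_upwards [hae] with x hx
  exact tsum_congr hx

private lemma weight_int_nonneg {n : ℕ} {p : ℝ} {Ω : Set (Euc n)} {u φ : Euc n → ℝ}
    (hφ0 : ∀ᵐ x ∂(volume.restrict Ω), 0 ≤ φ x) :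
    0 ≤ ∫ x in Ω, |u x| ^ p * φ x :=
  integral_nonneg_of_ae (hφ0.mono fun x hx =>
    mul_nonneg (Real.rpow_nonneg (abs_nonneg _) _) hx)

/-- The core Poincaré-type inequality, proved by compactness and contradiction. -/
private lemma key_ineq
    (n : ℕ) (s p : ℝ) (hp : 1 < p)
    (Ω : Set (Euc n))
    (hcomp : CompactEmbeddingWsp n s p Ω)
    (φ : Euc n → ℝ) (hφ : MemLp φ ⊤ (volume.restrict Ω))
    (hφ0 : ∀ᵐ x ∂(volume.restrict Ω), 0 ≤ φ x) (hφne : 0 < ∫ x in Ω, φ x)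
    (σ : ℝ) (hσ : 0 < σ) :
    ∃ κ : ℝ, 0 < κ ∧ ∀ v : Euc n → ℝ, inFracSobolev n s p Ω v →
      κ * ∫ x in Ω, |v x| ^ p
        ≤ gagliardo n s p Ω v / 2 + σ * ∫ x in Ω, |v x| ^ p * φ x := by
  classical
  have hp0 : (0:ℝ) < p := lt_trans one_pos hp
  by_contra hcon
  push_neg at hcon
  choose v hvW hvlt using fun k : ℕ => hcon ((1/2 : ℝ) ^ k) (by positivity)
  -- the energy is nonnegative, hence all the `v k` have positive `L^p` norm
  have hEnn : ∀ k, 0 ≤ gagliardo n s p Ω (v k) / 2 + σ * ∫ x in Ω, |v k x| ^ p * φ x := fun k =>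
    add_nonneg (div_nonneg (gagliardo_nonneg n s p Ω (v k)) (by norm_num))
      (mul_nonneg hσ.le (weight_int_nonneg hφ0))
  have hIpos : ∀ k, 0 < ∫ x in Ω, |v k x| ^ p := fun k => by
    have h1 := lt_of_le_of_lt (hEnn k) (hvlt k)
    have h2 : (0:ℝ) < (1/2:ℝ) ^ k := by positivity
    nlinarith [h1, h2]
  -- normalize
  set t : ℕ → ℝ := fun k => (∫ x in Ω, |v k x| ^ p)⁻¹ ^ (1/p) with htdef
  have htpos : ∀ k, 0 < t k := fun k => Real.rpow_pos_of_pos (inv_pos.2 (hIpos k)) _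
  have htp : ∀ k, t k ^ p = (∫ x in Ω, |v k x| ^ p)⁻¹ := fun k => by
    simp only [htdef]
    rw [← Real.rpow_mul (inv_nonneg.2 (hIpos k).le), one_div_mul_cancel hp0.ne',
      Real.rpow_one]
  set w : ℕ → Euc n → ℝ := fun k x => t k * v k x with hwdef
  have hwI : ∀ k, ∫ x in Ω, |w k x| ^ p = 1 := fun k => by
    simp only [hwdef]
    rw [int_smul n p (t k) (htpos k).le Ω (v k), htp k, inv_mul_cancel₀ (hIpos k).ne']
  have hwW : ∀ k, inFracSobolev n s p Ω (w k) := fun k => by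
    constructor
    · exact (hvW k).1.const_mul (t k)
    · have heq : (fun z : Euc n × Euc n =>
          |w k z.1 - w k z.2| ^ p / ‖z.1 - z.2‖ ^ ((n:ℝ) + s * p))
          = fun z => t k ^ p * (|v k z.1 - v k z.2| ^ p / ‖z.1 - z.2‖ ^ ((n:ℝ) + s * p)) := by
        funext z
        simp only [hwdef]
        rw [← mul_sub, abs_mul_rpow _ _ _ (htpos k).le, mul_div_assoc]
      unfold IntegrableOn
      rw [heq]
      exact ((hvW k).2.const_mul _)
  have hwE : ∀ k, gagliardo n s p Ω (w k) / 2 + σ * ∫ x in Ω, |w k x| ^ p * φ x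
      ≤ (1/2 : ℝ) ^ k := fun k => by
    have h1 : gagliardo n s p Ω (w k) = t k ^ p * gagliardo n s p Ω (v k) := by
      simp only [hwdef]
      exact gagliardo_smul n s p Ω (v k) (t k) (htpos k).le
    have h2 : ∫ x in Ω, |w k x| ^ p * φ x = t k ^ p * ∫ x in Ω, |v k x| ^ p * φ x := by
      simp only [hwdef]
      exact int_weight_smul n p (t k) (htpos k).le Ω (v k) φ
    have htp' : 0 < t k ^ p := Real.rpow_pos_of_pos (htpos k) p
    have h6 : t k ^ p * ∫ x in Ω, |v k x| ^ p = 1 := by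
      rw [htp k, inv_mul_cancel₀ (hIpos k).ne']
    have h7 := mul_lt_mul_of_pos_left (hvlt k) htp'
    have h8 : t k ^ p * ((1/2:ℝ) ^ k * ∫ x in Ω, |v k x| ^ p) = (1/2:ℝ) ^ k := by
      rw [← mul_assoc, mul_comm (t k ^ p) ((1/2:ℝ)^k), mul_assoc, h6, mul_one]
    rw [h1, h2]
    nlinarith [h7, h8]
  -- apply compactness
  have hbound : ∀ k, (∫ x in Ω, |w k x| ^ p) + gagliardo n s p Ω (w k) ≤ 3 := fun k => by
    have h1 := hwE k
    have h2 : (0:ℝ) ≤ σ * ∫ x in Ω, |w k x| ^ p * φ x :=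
      mul_nonneg hσ.le (weight_int_nonneg hφ0)
    have h3 : ((1:ℝ)/2) ^ k ≤ 1 := pow_le_one₀ (by norm_num) (by norm_num)
    rw [hwI k]
    linarith
  obtain ⟨V, ψ, hVmem, hψ, htend⟩ := hcomp w 3 hwW hbound
  obtain ⟨θ, hθ, hθP⟩ := Filter.extraction_forall_of_eventually
    (P := fun j k => ∫ x in Ω, |w (ψ k) x - V x| ^ p ≤ (1/2 : ℝ) ^ j)
    (fun j => (htend.eventually_lt_const (by positivity : (0:ℝ) < (1/2:ℝ)^j)).mono
      fun k hk => hk.le)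
  set g : ℕ → Euc n → ℝ := fun j => w (ψ (θ j)) with hgdef
  have hidx : ∀ j, j ≤ ψ (θ j) := fun j => (hψ.comp hθ).le_apply
  have hgI : ∀ j, ∫ x in Ω, |g j x| ^ p = 1 := fun j => hwI _
  have hgW : ∀ j, inFracSobolev n s p Ω (g j) := fun j => hwW _
  have hgE : ∀ j, gagliardo n s p Ω (g j) / 2 + σ * ∫ x in Ω, |g j x| ^ p * φ x
      ≤ (1/2 : ℝ) ^ j := fun j =>
    le_trans (hwE _) (pow_le_pow_of_le_one (by norm_num) (by norm_num) (hidx j))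
  have hgL : ∀ j, ∫ x in Ω, |g j x - V x| ^ p ≤ (1/2 : ℝ) ^ j := fun j => hθP j
  -- a.e. convergence of `g` to `V`
  have hint : ∀ j, Integrable (fun x => |g j x - V x| ^ p) (volume.restrict Ω) := fun j =>
    integrable_abs_rpow hp ((hgW j).1.sub hVmem)
  have hlintle : ∀ j, ∫⁻ x, ENNReal.ofReal (|g j x - V x| ^ p) ∂(volume.restrict Ω)
      ≤ ENNReal.ofReal ((1/2:ℝ)^j) := fun j => by
    rw [← ofReal_integral_eq_lintegral_ofReal (hint j)
      (Filter.Eventually.of_forall fun x => Real.rpow_nonneg (abs_nonneg _) _)]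
    exact ENNReal.ofReal_le_ofReal (hgL j)
  have hgeo : (∑' j : ℕ, ENNReal.ofReal ((1/2:ℝ) ^ j)) ≠ ⊤ := by
    have h1 : ∀ j : ℕ, ENNReal.ofReal ((1/2:ℝ) ^ j) = ENNReal.ofReal (1/2) ^ j := fun j =>
      ENNReal.ofReal_pow (by norm_num) j
    rw [tsum_congr h1, ENNReal.tsum_geometric]
    refine ENNReal.inv_ne_top.2 ?_
    intro h0
    rw [tsub_eq_zero_iff_le] at h0
    exact absurd h0 (not_le.2 (ENNReal.ofReal_lt_one.2 (by norm_num)))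
  have hmeasj : ∀ j, AEMeasurable (fun x => ENNReal.ofReal (|g j x - V x| ^ p))
      (volume.restrict Ω) := fun j => ((hint j).aemeasurable).ennreal_ofReal
  have hsum : (∑' j, ∫⁻ x, ENNReal.ofReal (|g j x - V x| ^ p) ∂(volume.restrict Ω)) ≠ ⊤ :=
    ne_top_of_le_ne_top hgeo (ENNReal.tsum_le_tsum hlintle)
  have haelt : ∀ᵐ x ∂(volume.restrict Ω),
      (∑' j, ENNReal.ofReal (|g j x - V x| ^ p)) < ⊤ := by
    refine ae_lt_top' (aemeasurable_ennreal_tsum hmeasj) ?_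
    rw [lintegral_tsum hmeasj]
    exact hsum
  have haet : ∀ᵐ x ∂(volume.restrict Ω), Tendsto (fun j => g j x) atTop (𝓝 (V x)) := by
    filter_upwards [haelt] with x hx
    have h1 : Tendsto (fun j => ENNReal.ofReal (|g j x - V x| ^ p)) atTop (𝓝 0) :=
      ENNReal.tendsto_atTop_zero_of_tsum_ne_top hx.ne
    have h2 : Tendsto (fun j => |g j x - V x| ^ p) atTop (𝓝 0) := by
      have h3 := (ENNReal.tendsto_toReal ENNReal.zero_ne_top).comp h1
      have heq : (ENNReal.toReal ∘ fun j => ENNReal.ofReal (|g j x - V x| ^ p))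
          = fun j => |g j x - V x| ^ p := by
        funext j
        simp only [Function.comp_apply]
        exact ENNReal.toReal_ofReal (Real.rpow_nonneg (abs_nonneg _) _)
      rw [heq] at h3
      simpa using h3
    have h4 : Tendsto (fun j => |g j x - V x|) atTop (𝓝 0) := by
      have hc : ContinuousAt (fun y : ℝ => y ^ (1/p)) 0 :=
        Real.continuousAt_rpow_const 0 (1/p) (Or.inr (by positivity))
      have h5 := (hc.tendsto).comp h2
      have heq : ((fun y : ℝ => y ^ (1/p)) ∘ fun j => |g j x - V x| ^ p)
          = fun j => |g j x - V x| := by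
        funext j
        simp only [Function.comp_apply]
        rw [← Real.rpow_mul (abs_nonneg _), mul_one_div, div_self hp0.ne', Real.rpow_one]
      rw [heq] at h5
      simpa [one_div, Real.zero_rpow (inv_ne_zero hp0.ne'),
        Real.zero_rpow (one_div_ne_zero hp0.ne')] using h5
    have h6 : Tendsto (fun j => dist (g j x) (V x)) atTop (𝓝 0) := by
      simpa [Real.dist_eq] using h4
    exact tendsto_iff_dist_tendsto_zero.mpr h6
  -- product measure facts
  have hprodν : (volume.restrict Ω).prod (volume.restrict Ω) = volume.restrict (Ω ×ˢ Ω) := by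
    rw [Measure.prod_restrict, ← Measure.volume_eq_prod]
  have haefst : ∀ᵐ z : Euc n × Euc n ∂((volume.restrict Ω).prod (volume.restrict Ω)),
      Tendsto (fun j => g j z.1) atTop (𝓝 (V z.1)) :=
    Measure.quasiMeasurePreserving_fst.ae haet
  have haesnd : ∀ᵐ z : Euc n × Euc n ∂((volume.restrict Ω).prod (volume.restrict Ω)),
      Tendsto (fun j => g j z.2) atTop (𝓝 (V z.2)) :=
    Measure.quasiMeasurePreserving_snd.ae haet
  have haeprod := haefst.and haesnd
  -- Fatou for the Gagliardo seminorm
  set K : (Euc n → ℝ) → Euc n × Euc n → ℝ≥0∞ := fun u z =>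
    ENNReal.ofReal (|u z.1 - u z.2| ^ p / ‖z.1 - z.2‖ ^ ((n:ℝ) + s * p)) with hKdef
  have hKtend : ∀ᵐ z ∂(volume.restrict (Ω ×ˢ Ω)),
      Tendsto (fun j => K (g j) z) atTop (𝓝 (K V z)) := by
    rw [← hprodν]
    filter_upwards [haeprod] with z hz
    simp only [hKdef]
    refine (ENNReal.continuous_ofReal.tendsto _).comp ?_
    by_cases hzz : z.1 = z.2
    · simp only [hzz, sub_self, abs_zero, Real.zero_rpow hp0.ne', zero_div]
      exact tendsto_const_nhds
    · have hnum : Tendsto (fun j => |g j z.1 - g j z.2| ^ p) atTop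
          (𝓝 (|V z.1 - V z.2| ^ p)) := by
        have h1 := hz.1.sub hz.2
        have h2 := (continuous_abs.tendsto _).comp h1
        have h3 := ((Real.continuousAt_rpow_const _ p (Or.inr hp0.le)).tendsto).comp h2
        simpa [Function.comp_def] using h3
      exact hnum.div_const _
  have hKmeasj : ∀ j, AEMeasurable (K (g j)) (volume.restrict (Ω ×ˢ Ω)) := fun j =>
    ((hgW j).2.aemeasurable).ennreal_ofReal
  have hVaem : AEMeasurable V (volume.restrict Ω) := hVmem.aestronglyMeasurable.aemeasurable
  have hKVmeas : AEMeasurable (K V) (volume.restrict (Ω ×ˢ Ω)) := by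
    rw [← hprodν]
    simp only [hKdef]
    refine AEMeasurable.ennreal_ofReal (AEMeasurable.div ?_ ?_)
    · exact (measurable_abs.comp_aemeasurable (hVaem.comp_fst.sub hVaem.comp_snd)).pow aemeasurable_const
    · exact ((measurable_fst.sub measurable_snd).norm.pow measurable_const).aemeasurable
  have hKlint : ∀ j, ∫⁻ z, K (g j) z ∂(volume.restrict (Ω ×ˢ Ω))
      ≤ ENNReal.ofReal (2 * (1/2:ℝ)^j) := fun j => by
    simp only [hKdef]
    rw [← ofReal_integral_eq_lintegral_ofReal (hgW j).2
      (Filter.Eventually.of_forall fun z => div_nonneg (Real.rpow_nonneg (abs_nonneg _) _)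
        (Real.rpow_nonneg (norm_nonneg _) _))]
    apply ENNReal.ofReal_le_ofReal
    have h1 := hgE j
    have h2 : 0 ≤ σ * ∫ x in Ω, |g j x| ^ p * φ x :=
      mul_nonneg hσ.le (weight_int_nonneg hφ0)
    show gagliardo n s p Ω (g j) ≤ 2 * (1/2:ℝ)^j
    linarith
  have hKV : ∫⁻ z, K V z ∂(volume.restrict (Ω ×ˢ Ω)) = 0 := by
    have hle1 : ∫⁻ z, K V z ∂(volume.restrict (Ω ×ˢ Ω))
        ≤ liminf (fun j => ∫⁻ z, K (g j) z ∂(volume.restrict (Ω ×ˢ Ω))) atTop := by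
      have hcongr : ∫⁻ z, K V z ∂(volume.restrict (Ω ×ˢ Ω))
          = ∫⁻ z, liminf (fun j => K (g j) z) atTop ∂(volume.restrict (Ω ×ˢ Ω)) := by
        apply lintegral_congr_ae
        filter_upwards [hKtend] with z hz
        exact (hz.liminf_eq).symm
      rw [hcongr]
      exact lintegral_liminf_le' hKmeasj
    have hle2 : liminf (fun j => ∫⁻ z, K (g j) z ∂(volume.restrict (Ω ×ˢ Ω))) atTop
        ≤ liminf (fun j => ENNReal.ofReal (2 * (1/2:ℝ)^j)) atTop :=
      liminf_le_liminf (Filter.Eventually.of_forall hKlint)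
    have hle3 : liminf (fun j : ℕ => ENNReal.ofReal (2 * (1/2:ℝ)^j)) atTop = 0 := by
      have h1 : Tendsto (fun j : ℕ => 2 * (1/2:ℝ)^j) atTop (𝓝 0) := by
        have := tendsto_pow_atTop_nhds_zero_of_lt_one (by norm_num : (0:ℝ) ≤ 1/2)
          (by norm_num : (1/2:ℝ) < 1)
        simpa using this.const_mul 2
      have h2 := (ENNReal.continuous_ofReal.tendsto 0).comp h1
      have h2' : Tendsto (fun j : ℕ => ENNReal.ofReal (2 * (1/2:ℝ)^j)) atTop (𝓝 0) := by
        simpa [Function.comp_def] using h2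
      exact h2'.liminf_eq
    exact le_antisymm (le_trans hle1 (le_trans hle2 (le_of_eq hle3))) zero_le
  -- V is a.e. constant
  have hVconst : ∀ᵐ z ∂((volume.restrict Ω).prod (volume.restrict Ω)), V z.1 = V z.2 := by
    have h0 : ∀ᵐ z ∂(volume.restrict (Ω ×ˢ Ω)), K V z = 0 :=
      (lintegral_eq_zero_iff' hKVmeas).1 hKV
    rw [hprodν]
    filter_upwards [h0] with z hz
    simp only [hKdef] at hz
    by_cases hzz : z.1 = z.2
    · rw [hzz]
    · have hdpos : 0 < ‖z.1 - z.2‖ ^ ((n:ℝ) + s * p) :=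
        Real.rpow_pos_of_pos (norm_pos_iff.2 (sub_ne_zero.2 hzz)) _
      rw [ENNReal.ofReal_eq_zero] at hz
      have hqn : 0 ≤ |V z.1 - V z.2| ^ p / ‖z.1 - z.2‖ ^ ((n:ℝ) + s * p) :=
        div_nonneg (Real.rpow_nonneg (abs_nonneg _) _) hdpos.le
      have h7 : |V z.1 - V z.2| ^ p / ‖z.1 - z.2‖ ^ ((n:ℝ) + s * p) = 0 :=
        le_antisymm hz hqn
      rcases div_eq_zero_iff.1 h7 with h8 | h8
      · have h9 := ((Real.rpow_eq_zero_iff_of_nonneg (abs_nonneg _)).1 h8).1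
        exact sub_eq_zero.1 (abs_eq_zero.1 h9)
      · exact absurd h8 hdpos.ne'
  have hν0 : (volume.restrict Ω) ≠ 0 := by
    intro h0
    rw [show (∫ x in Ω, φ x) = ∫ x, φ x ∂(volume.restrict Ω) from rfl, h0,
      integral_zero_measure] at hφne
    exact lt_irrefl _ hφne
  obtain ⟨c, hc⟩ : ∃ c : ℝ, V =ᵐ[volume.restrict Ω] fun _ => c := by
    have h := Measure.ae_ae_of_ae_prod hVconst
    haveI : (ae (volume.restrict Ω)).NeBot := ae_neBot.2 hν0
    obtain ⟨x₀, hx₀⟩ := h.exists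
    exact ⟨V x₀, hx₀.mono fun y hy => hy.symm⟩
  -- Fatou for the weight term
  have hφint : ∀ j, Integrable (fun x => |g j x| ^ p * φ x) (volume.restrict Ω) := fun j =>
    integrable_abs_rpow_mul hp (hgW j).1 hφ
  have hφmeasj : ∀ j, AEMeasurable (fun x => ENNReal.ofReal (|g j x| ^ p * φ x))
      (volume.restrict Ω) := fun j => (hφint j).aemeasurable.ennreal_ofReal
  have hVφmeas : AEMeasurable (fun x => ENNReal.ofReal (|V x| ^ p * φ x))
      (volume.restrict Ω) :=
    (((measurable_abs.comp_aemeasurable hVaem).pow aemeasurable_const).mul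
      hφ.aestronglyMeasurable.aemeasurable).ennreal_ofReal
  have hφlint : ∀ j, ∫⁻ x, ENNReal.ofReal (|g j x| ^ p * φ x) ∂(volume.restrict Ω)
      ≤ ENNReal.ofReal ((1/2:ℝ)^j / σ) := fun j => by
    rw [← ofReal_integral_eq_lintegral_ofReal (hφint j)
      (hφ0.mono fun x hx => mul_nonneg (Real.rpow_nonneg (abs_nonneg _) _) hx)]
    apply ENNReal.ofReal_le_ofReal
    have h1 := hgE j
    have h2 := gagliardo_nonneg n s p Ω (g j)
    rw [le_div_iff₀ hσ, mul_comm]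
    linarith
  have hφtend : ∀ᵐ x ∂(volume.restrict Ω),
      Tendsto (fun j => ENNReal.ofReal (|g j x| ^ p * φ x)) atTop
        (𝓝 (ENNReal.ofReal (|V x| ^ p * φ x))) := by
    filter_upwards [haet] with x hx
    refine (ENNReal.continuous_ofReal.tendsto _).comp ?_
    have h1 := (continuous_abs.tendsto _).comp hx
    have h2 := ((Real.continuousAt_rpow_const _ p (Or.inr hp0.le)).tendsto).comp h1
    have h3 := h2.mul_const (φ x)
    simpa [Function.comp_def] using h3
  have hφV : ∫⁻ x, ENNReal.ofReal (|V x| ^ p * φ x) ∂(volume.restrict Ω) = 0 := by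
    have hle1 : ∫⁻ x, ENNReal.ofReal (|V x| ^ p * φ x) ∂(volume.restrict Ω)
        ≤ liminf (fun j => ∫⁻ x, ENNReal.ofReal (|g j x| ^ p * φ x) ∂(volume.restrict Ω))
          atTop := by
      have hcongr : ∫⁻ x, ENNReal.ofReal (|V x| ^ p * φ x) ∂(volume.restrict Ω)
          = ∫⁻ x, liminf (fun j => ENNReal.ofReal (|g j x| ^ p * φ x)) atTop
            ∂(volume.restrict Ω) := by
        apply lintegral_congr_ae
        filter_upwards [hφtend] with x hx
        exact (hx.liminf_eq).symm
      rw [hcongr]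
      exact lintegral_liminf_le' hφmeasj
    have hle2 : liminf (fun j => ∫⁻ x, ENNReal.ofReal (|g j x| ^ p * φ x)
          ∂(volume.restrict Ω)) atTop
        ≤ liminf (fun j => ENNReal.ofReal ((1/2:ℝ)^j / σ)) atTop :=
      liminf_le_liminf (Filter.Eventually.of_forall hφlint)
    have hle3 : liminf (fun j : ℕ => ENNReal.ofReal ((1/2:ℝ)^j / σ)) atTop = 0 := by
      have h1 : Tendsto (fun j : ℕ => (1/2:ℝ)^j / σ) atTop (𝓝 0) := by
        have := tendsto_pow_atTop_nhds_zero_of_lt_one (by norm_num : (0:ℝ) ≤ 1/2)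
          (by norm_num : (1/2:ℝ) < 1)
        simpa using this.div_const σ
      have h2 := (ENNReal.continuous_ofReal.tendsto 0).comp h1
      have h2' : Tendsto (fun j : ℕ => ENNReal.ofReal ((1/2:ℝ)^j / σ)) atTop (𝓝 0) := by
        simpa [Function.comp_def] using h2
      exact h2'.liminf_eq
    exact le_antisymm (le_trans hle1 (le_trans hle2 (le_of_eq hle3))) zero_le
  have hφV0 : ∀ᵐ x ∂(volume.restrict Ω), |V x| ^ p * φ x = 0 := by
    have h0 := (lintegral_eq_zero_iff' hVφmeas).1 hφV
    filter_upwards [h0, hφ0] with x h1 h2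
    simp only [Pi.zero_apply, ENNReal.ofReal_eq_zero] at h1
    have h3 : 0 ≤ |V x| ^ p * φ x := mul_nonneg (Real.rpow_nonneg (abs_nonneg _) _) h2
    linarith
  -- final contradiction
  by_cases hc0 : c = 0
  · have h1 : ∫ x in Ω, |g 1 x - V x| ^ p = ∫ x in Ω, |g 1 x| ^ p := by
      apply integral_congr_ae
      filter_upwards [hc] with x hx
      rw [hx, hc0, sub_zero]
    have h2 := hgL 1
    rw [h1, hgI 1] at h2
    norm_num at h2
  · have hφz : ∀ᵐ x ∂(volume.restrict Ω), φ x = 0 := by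
      filter_upwards [hφV0, hc] with x h1 h2
      rw [h2] at h1
      have hcp : 0 < |c| ^ p := Real.rpow_pos_of_pos (abs_pos.2 hc0) _
      exact (mul_eq_zero.1 h1).resolve_left hcp.ne'
    have h9 : ∫ x in Ω, φ x = 0 := integral_eq_zero_of_ae hφz
    linarith

/-- The soft obstacle eigenvalue `λ_s(σ,φ)` is bounded below by a positive constant,
equivalently a Poincaré-type inequality holds. -/
theorem lambdaSigma_positive
    (n : ℕ) (s p : ℝ) (hs0 : 0 < s) (hs1 : s < 1) (hp : 1 < p)
    (Ω : Set (Euc n)) (hΩo : IsOpen Ω) (hΩb : Bornology.IsBounded Ω)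
    (hcomp : CompactEmbeddingWsp n s p Ω)
    (φ : Euc n → ℝ) (hφ : MemLp φ ⊤ (volume.restrict Ω))
    (hφ0 : ∀ᵐ x ∂(volume.restrict Ω), 0 ≤ φ x) (hφne : 0 < ∫ x in Ω, φ x)
    (σ : ℝ) (hσ : 0 < σ) :
    (∃ κ : ℝ, 0 < κ ∧ κ ≤ lambdaSigma n s p Ω σ φ) ∧
    ∃ C : ℝ, 0 < C ∧ ∀ v : Euc n → ℝ, inFracSobolev n s p Ω v →
      (∫ x in Ω, |v x| ^ p)
        ≤ C * (gagliardo n s p Ω v / 2 + σ * ∫ x in Ω, |v x| ^ p * φ x) := by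
  obtain ⟨κ, hκ, hkey⟩ := key_ineq n s p hp Ω hcomp φ hφ hφ0 hφne σ hσ
  have hp0 : (0:ℝ) < p := lt_trans one_pos hp
  constructor
  · refine ⟨κ, hκ, le_csInf ?_ ?_⟩
    · -- nonempty: the constant function 1
      have hΩfin : volume Ω < ⊤ := hΩb.measure_lt_top
      haveI : IsFiniteMeasure (volume.restrict Ω) :=
        ⟨by rwa [Measure.restrict_apply_univ]⟩
      have hν0 : (volume.restrict Ω) ≠ 0 := by
        intro h0
        rw [show (∫ x in Ω, φ x) = ∫ x, φ x ∂(volume.restrict Ω) from rfl, h0,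
          integral_zero_measure] at hφne
        exact lt_irrefl _ hφne
      have hΩ0 : volume Ω ≠ 0 := by
        intro h0
        apply hν0
        rw [← Measure.restrict_apply_univ] at h0
        exact Measure.measure_univ_eq_zero.1 h0
      refine ⟨_, ⟨fun _ => (1:ℝ), ⟨?_, ?_⟩, ?_, rfl⟩⟩
      · exact memLp_const 1
      · have heq : (fun z : Euc n × Euc n =>
            |(1:ℝ) - 1| ^ p / ‖z.1 - z.2‖ ^ ((n : ℝ) + s * p)) = fun _ => (0:ℝ) := by
          funext z
          rw [sub_self, abs_zero, Real.zero_rpow hp0.ne', zero_div]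
        unfold IntegrableOn
        rw [heq]
        exact integrable_zero _ _ _
      · have heq : (fun x : Euc n => |(1:ℝ)| ^ p) = fun _ => (1:ℝ) := by
          funext x; rw [abs_one, Real.one_rpow]
        rw [heq, setIntegral_const, smul_eq_mul, mul_one]
        exact ENNReal.toReal_pos hΩ0 hΩfin.ne
    · rintro r ⟨u, huW, huI, rfl⟩
      rw [le_div_iff₀ huI]
      exact hkey u huW
  · refine ⟨κ⁻¹, inv_pos.2 hκ, fun u huW => ?_⟩
    have h := hkey u huW
    rw [inv_mul_eq_div, le_div_iff₀ hκ, mul_comm]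
    exact h
end
end
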